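/- Let l, k be integers with 1 ≤ k ≤ l, let ξ_1,…,ξ_{2l−k} be mutually independent rate-1 exponential random variables, and set X := Σ_{i=1}^{l} ξ_i and X' := Σ_{i=1}^{k} ξ_i + Σ_{i=l+1}^{2l−k} ξ_i. Then for all reals a > 0 and b > 0: P(X ≤ a+b and X' ≤ a+b) ≤ e^{2a} · ((a+b)/a)^{2l−k} · P(X ≤ a and X' ≤ a). -/

import Mathlib

open MeasureTheory ProbabilityTheory Finset Real

open scoped ENNReal Pointwise

lemma lintegral_pi_prod : ∀ (n : ℕ) (f : Fin n → ℝ → ℝ≥0∞), (∀ i, Measurable (f i)) →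
    ∫⁻ x : Fin n → ℝ, ∏ i, f i (x i) ∂(Measure.pi fun _ => (volume : Measure ℝ))
      = ∏ i, ∫⁻ t, f i t := by
  intro n
  induction n with
  | zero =>
    intro f hf
    simp [Measure.pi_univ]
  | succ n ih =>
    intro f hf
    have hF : Measurable fun x : Fin (n+1) → ℝ => ∏ i, f i (x i) :=
      Finset.measurable_prod _ fun i _ => (hf i).comp (measurable_pi_apply i)
    have hmp := (measurePreserving_piFinSuccAbove
      (fun _ : Fin (n+1) => (volume : Measure ℝ)) 0).symm
    rw [← hmp.lintegral_comp hF]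
    have : ∀ p : ℝ × (Fin n → ℝ),
        (∏ i, f i (((MeasurableEquiv.piFinSuccAbove (fun _ : Fin (n+1) => ℝ) 0).symm p) i))
          = f 0 p.1 * ∏ j : Fin n, f j.succ (p.2 j) := by
      intro p
      rw [Fin.prod_univ_succ]
      have h0 : ((MeasurableEquiv.piFinSuccAbove (fun _ : Fin (n+1) => ℝ) 0).symm p) 0 = p.1 := by
        simp [MeasurableEquiv.piFinSuccAbove]
      have hs : ∀ j : Fin n,
          ((MeasurableEquiv.piFinSuccAbove (fun _ : Fin (n+1) => ℝ) 0).symm p) j.succ = p.2 j := by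
        intro j
        simp [MeasurableEquiv.piFinSuccAbove, Fin.zero_succAbove]
      simp only [h0, hs]
    simp_rw [this]
    rw [lintegral_prod_mul (f := f 0) (g := fun y : Fin n → ℝ => ∏ j, f j.succ (y j))
      (hf 0).aemeasurable
      ((Finset.measurable_prod _ fun j _ => (hf j.succ).comp (measurable_pi_apply j)).aemeasurable)]
    rw [ih _ fun j => hf j.succ, Fin.prod_univ_succ]

lemma pi_withDensity_prod (n : ℕ) (f : Fin n → ℝ → ℝ≥0∞) (hf : ∀ i, Measurable (f i))
    (hsf : ∀ i, SigmaFinite ((volume : Measure ℝ).withDensity (f i))) :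
    Measure.pi (fun i => (volume : Measure ℝ).withDensity (f i))
      = (Measure.pi fun _ => (volume : Measure ℝ)).withDensity (fun x => ∏ i, f i (x i)) := by
  haveI := hsf
  refine Measure.pi_eq fun s hs => ?_
  rw [withDensity_apply _ (MeasurableSet.univ_pi hs),
    ← lintegral_indicator (MeasurableSet.univ_pi hs)]
  have hind : ∀ x : Fin n → ℝ,
      (Set.pi Set.univ s).indicator (fun x => ∏ i, f i (x i)) x
        = ∏ i, (s i).indicator (f i) (x i) := by
    intro x
    by_cases hx : x ∈ Set.pi Set.univ s
    · rw [Set.indicator_of_mem hx]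
      exact Finset.prod_congr rfl fun i _ =>
        (Set.indicator_of_mem (hx i trivial) _).symm
    · rw [Set.indicator_of_notMem hx]
      obtain ⟨i, hi⟩ : ∃ i, x i ∉ s i := by simpa [Set.mem_pi] using hx
      exact (Finset.prod_eq_zero (Finset.mem_univ i)
        (by simp [Set.indicator_of_notMem hi])).symm
  simp_rw [hind]
  rw [lintegral_pi_prod n _ (fun i => (hf i).indicator (hs i))]
  exact Finset.prod_congr rfl fun i _ => by
    rw [lintegral_indicator (hs i), withDensity_apply _ (hs i)]

lemma exponentialPDF_smul_le {lam t : ℝ} (hlam : 1 ≤ lam) :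
    exponentialPDF 1 (lam * t) ≤ exponentialPDF 1 t := by
  rcases lt_or_ge t 0 with ht | ht
  · rw [exponentialPDF_of_neg (by nlinarith)]
    exact zero_le
  · rw [exponentialPDF_of_nonneg (by nlinarith), exponentialPDF_of_nonneg ht]
    apply ENNReal.ofReal_le_ofReal
    simp only [one_mul]
    exact exp_le_exp.2 (by nlinarith)

lemma expMeasure_one_eq :
    expMeasure 1 = (volume : Measure ℝ).withDensity (exponentialPDF 1) := rfl

lemma pi_exp_smul_le (n : ℕ) {T : Set (Fin n → ℝ)} (hT : MeasurableSet T)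
    {lam : ℝ} (hlam : 1 ≤ lam) :
    Measure.pi (fun _ : Fin n => expMeasure 1) (lam • T)
      ≤ ENNReal.ofReal (lam ^ n) * Measure.pi (fun _ : Fin n => expMeasure 1) T := by
  have hlam0 : (0:ℝ) < lam := lt_of_lt_of_le one_pos hlam
  have hne : lam ≠ 0 := hlam0.ne'
  haveI : IsProbabilityMeasure (expMeasure 1) := isProbabilityMeasure_expMeasure one_pos
  have hpdf : Measurable (exponentialPDF 1) :=
    ENNReal.measurable_ofReal.comp (measurable_exponentialPDFReal 1)
  have hF : Measurable fun x : Fin n → ℝ => ∏ i, exponentialPDF 1 (x i) :=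
    Finset.measurable_prod _ fun i _ => hpdf.comp (measurable_pi_apply i)
  have hpi : Measure.pi (fun _ : Fin n => expMeasure 1)
      = (Measure.pi fun _ : Fin n => (volume : Measure ℝ)).withDensity
        (fun x => ∏ i, exponentialPDF 1 (x i)) := by
    rw [expMeasure_one_eq]
    exact pi_withDensity_prod n _ (fun _ => hpdf)
      (fun _ => by rw [← expMeasure_one_eq]; infer_instance)
  have hTsm : lam • T = (fun x : Fin n → ℝ => lam⁻¹ • x) ⁻¹' T := by
    ext x
    rw [Set.mem_preimage, Set.mem_smul_set_iff_inv_smul_mem₀ hne]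
  have hTm : MeasurableSet (lam • T) := by
    rw [hTsm]; exact hT.preimage (measurable_const_smul _)
  have hvol : (Measure.pi fun _ : Fin n => (volume : Measure ℝ)) = (volume : Measure (Fin n → ℝ)) :=
    (volume_pi).symm
  rw [hpi, hvol, withDensity_apply _ hTm, withDensity_apply _ hT,
    ← lintegral_indicator hTm, ← lintegral_indicator hT]
  have hmap : Measure.map (lam • ·) (volume : Measure (Fin n → ℝ))
      = ENNReal.ofReal |(lam ^ n)⁻¹| • volume := by
    have := Measure.map_addHaar_smul (volume : Measure (Fin n → ℝ)) (r := lam) hne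
    rwa [Module.finrank_fin_fun] at this
  have hG : Measurable ((lam • T).indicator fun x : Fin n → ℝ => ∏ i, exponentialPDF 1 (x i)) :=
    hF.indicator hTm
  have hvol_eq : (volume : Measure (Fin n → ℝ))
      = ENNReal.ofReal (lam ^ n) • Measure.map (lam • ·) (volume : Measure (Fin n → ℝ)) := by
    rw [hmap, smul_smul, ← ENNReal.ofReal_mul (by positivity)]
    rw [abs_of_pos (by positivity), mul_inv_cancel₀ (by positivity)]
    simp
  calc ∫⁻ x, (lam • T).indicator (fun x => ∏ i, exponentialPDF 1 (x i)) x ∂volume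
      = ENNReal.ofReal (lam ^ n) * ∫⁻ x, (lam • T).indicator
          (fun x => ∏ i, exponentialPDF 1 (x i)) x
          ∂(Measure.map (lam • ·) (volume : Measure (Fin n → ℝ))) := by
        conv_lhs => rw [hvol_eq]
        rw [lintegral_smul_measure, smul_eq_mul]
    _ = ENNReal.ofReal (lam ^ n) * ∫⁻ y, (lam • T).indicator
          (fun x => ∏ i, exponentialPDF 1 (x i)) (lam • y) ∂volume := by
        rw [lintegral_map hG (measurable_const_smul _)]
    _ ≤ ENNReal.ofReal (lam ^ n) * ∫⁻ y, T.indicator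
          (fun x => ∏ i, exponentialPDF 1 (x i)) y ∂volume := by
        gcongr with y
        by_cases hy : y ∈ T
        · rw [Set.indicator_of_mem (Set.smul_mem_smul_set hy), Set.indicator_of_mem hy]
          refine Finset.prod_le_prod' fun i _ => ?_
          have : (lam • y) i = lam * y i := rfl
          rw [this]
          exact exponentialPDF_smul_le hlam
        · rw [Set.indicator_of_notMem (fun h => hy ((Set.smul_mem_smul_set_iff₀ hne T y).1 h)),
            Set.indicator_of_notMem hy]
/-- **Lemma 6.5**: let `ξ_1, …, ξ_{2l−k}` be mutually independent rate-1 exponential random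
variables, `X := ξ_1 + ⋯ + ξ_l` and `X' := ξ_1 + ⋯ + ξ_k + ξ_{l+1} + ⋯ + ξ_{2l−k}`. Then for
all `a, b > 0`, `P(X ≤ a+b, X' ≤ a+b) ≤ e^{2a}·((a+b)/a)^{2l−k}·P(X ≤ a, X' ≤ a)`. -/
theorem overlap_probability_shift
    {Ω : Type*} [MeasurableSpace Ω] (μ : Measure Ω) [IsProbabilityMeasure μ]
    (l k : ℕ) (hk1 : 1 ≤ k) (hkl : k ≤ l)
    (ξ : ℕ → Ω → ℝ) (hmeas : ∀ i, Measurable (ξ i))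
    (hindep : iIndepFun
      (fun i : Fin (2 * l - k) => ξ ((i : ℕ) + 1)) μ)
    (hexp : ∀ i, 1 ≤ i → i ≤ 2 * l - k → μ.map (ξ i) = expMeasure 1)
    (a b : ℝ) (ha : 0 < a) (hb : 0 < b) :
    (μ {ω | (∑ i ∈ Finset.Icc 1 l, ξ i ω) ≤ a + b ∧
        ((∑ i ∈ Finset.Icc 1 k, ξ i ω) + ∑ i ∈ Finset.Icc (l + 1) (2 * l - k), ξ i ω) ≤ a + b}).toReal ≤
      Real.exp (2 * a) * ((a + b) / a) ^ (2 * l - k) *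
        (μ {ω | (∑ i ∈ Finset.Icc 1 l, ξ i ω) ≤ a ∧
          ((∑ i ∈ Finset.Icc 1 k, ξ i ω) + ∑ i ∈ Finset.Icc (l + 1) (2 * l - k), ξ i ω) ≤ a}).toReal := by
  haveI : IsProbabilityMeasure (expMeasure 1) := isProbabilityMeasure_expMeasure one_pos
  set n := 2 * l - k with hn_def
  have hln : l ≤ n := by omega
  have hkn : k ≤ n := by omega
  set Y : Ω → Fin n → ℝ := fun ω i => ξ (i.1 + 1) ω with hY_def
  have hY : Measurable Y := measurable_pi_lambda _ fun i => hmeas _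
  set A : ℝ → Set (Fin n → ℝ) := fun t => {x | (∑ j : Fin l, x (Fin.castLE hln j)) ≤ t ∧
      ((∑ j : Fin k, x (Fin.castLE hkn j))
        + ∑ j : Fin (n - l), x ⟨l + j.1, by have := j.2; omega⟩) ≤ t} with hA_def
  have hA : ∀ t, MeasurableSet (A t) := by
    intro t
    have h1 : Measurable fun x : Fin n → ℝ => ∑ j : Fin l, x (Fin.castLE hln j) :=
      Finset.measurable_sum _ fun j _ => measurable_pi_apply _
    have h2 : Measurable fun x : Fin n → ℝ => ∑ j : Fin k, x (Fin.castLE hkn j) :=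
      Finset.measurable_sum _ fun j _ => measurable_pi_apply _
    have h3 : Measurable fun x : Fin n → ℝ =>
        ∑ j : Fin (n - l), x ⟨l + j.1, by have := j.2; omega⟩ :=
      Finset.measurable_sum _ fun j _ => measurable_pi_apply _
    rw [hA_def]
    exact (measurableSet_le h1 measurable_const).inter
      (measurableSet_le (h2.add h3) measurable_const)
  have hmapY : μ.map Y = Measure.pi (fun _ : Fin n => expMeasure 1) := by
    refine (Measure.pi_eq fun s hs => ?_).symm
    rw [Measure.map_apply hY (MeasurableSet.univ_pi hs)]
    have hpre : Y ⁻¹' Set.pi Set.univ s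
        = ⋂ i ∈ (Finset.univ : Finset (Fin n)), (fun ω => ξ (i.1 + 1) ω) ⁻¹' s i := by
      ext ω
      simp [Set.mem_pi, hY_def]
    rw [hpre, hindep.measure_inter_preimage_eq_mul Finset.univ (fun i _ => hs i)]
    refine Finset.prod_congr rfl fun i _ => ?_
    rw [← Measure.map_apply (hmeas _) (hs i),
      hexp (i.1 + 1) (by omega) (by have := i.2; omega)]
  have hs1 : ∀ ω, ∑ i ∈ Finset.Icc 1 l, ξ i ω = ∑ j : Fin l, Y ω (Fin.castLE hln j) := by
    intro ω
    rw [← Finset.Ico_add_one_right_eq_Icc, Finset.sum_Ico_eq_sum_range]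
    simp only [Nat.add_sub_cancel]
    rw [← Fin.sum_univ_eq_sum_range (fun j => ξ (1 + j) ω) l]
    exact Finset.sum_congr rfl fun j _ => by rw [hY_def]; simp [Nat.add_comm]
  have hs2 : ∀ ω, ∑ i ∈ Finset.Icc 1 k, ξ i ω = ∑ j : Fin k, Y ω (Fin.castLE hkn j) := by
    intro ω
    rw [← Finset.Ico_add_one_right_eq_Icc, Finset.sum_Ico_eq_sum_range]
    simp only [Nat.add_sub_cancel]
    rw [← Fin.sum_univ_eq_sum_range (fun j => ξ (1 + j) ω) k]
    exact Finset.sum_congr rfl fun j _ => by rw [hY_def]; simp [Nat.add_comm]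
  have hs3 : ∀ ω, ∑ i ∈ Finset.Icc (l + 1) n, ξ i ω
      = ∑ j : Fin (n - l), Y ω ⟨l + j.1, by have := j.2; omega⟩ := by
    intro ω
    rw [← Finset.Ico_add_one_right_eq_Icc, Finset.sum_Ico_eq_sum_range]
    have : n + 1 - (l + 1) = n - l := by omega
    rw [this, ← Fin.sum_univ_eq_sum_range (fun j => ξ (l + 1 + j) ω) (n - l)]
    refine Finset.sum_congr rfl fun j _ => ?_
    rw [hY_def]
    simp only
    congr 1
    omega
  have hEv : ∀ t, {ω | (∑ i ∈ Finset.Icc 1 l, ξ i ω) ≤ t ∧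
      ((∑ i ∈ Finset.Icc 1 k, ξ i ω) + ∑ i ∈ Finset.Icc (l + 1) n, ξ i ω) ≤ t}
        = Y ⁻¹' A t := by
    intro t
    ext ω
    simp only [Set.mem_setOf_eq, Set.mem_preimage, hA_def]
    rw [hs1 ω, hs2 ω, hs3 ω]
  have hμE : ∀ t, μ {ω | (∑ i ∈ Finset.Icc 1 l, ξ i ω) ≤ t ∧
      ((∑ i ∈ Finset.Icc 1 k, ξ i ω) + ∑ i ∈ Finset.Icc (l + 1) n, ξ i ω) ≤ t}
        = Measure.pi (fun _ : Fin n => expMeasure 1) (A t) := by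
    intro t
    rw [hEv t, ← Measure.map_apply hY (hA t), hmapY]
  set lam : ℝ := (a + b) / a with hlam_def
  have hlam1 : (1:ℝ) ≤ lam := by
    rw [hlam_def, le_div_iff₀ ha]
    linarith
  have hlam0 : (0:ℝ) < lam := lt_of_lt_of_le one_pos hlam1
  have hmul : lam * a = a + b := div_mul_cancel₀ _ ha.ne'
  have hsmul : lam • A a = A (a + b) := by
    ext x
    rw [Set.mem_smul_set_iff_inv_smul_mem₀ hlam0.ne']
    simp only [hA_def, Set.mem_setOf_eq, Pi.smul_apply, smul_eq_mul]
    rw [← Finset.mul_sum, ← Finset.mul_sum, ← Finset.mul_sum, ← mul_add]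
    have key : ∀ s : ℝ, lam⁻¹ * s ≤ a ↔ s ≤ a + b := by
      intro s
      rw [← hmul, inv_mul_le_iff₀ hlam0]
    rw [key, key]
  have hkey : Measure.pi (fun _ : Fin n => expMeasure 1) (A (a + b))
      ≤ ENNReal.ofReal (lam ^ n) * Measure.pi (fun _ : Fin n => expMeasure 1) (A a) := by
    rw [← hsmul]
    exact pi_exp_smul_le n (hA a) hlam1
  rw [hμE (a + b), hμE a]
  have hfin : ENNReal.ofReal (lam ^ n) * Measure.pi (fun _ : Fin n => expMeasure 1) (A a) ≠ ⊤ :=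
    ENNReal.mul_ne_top ENNReal.ofReal_ne_top (measure_ne_top _ _)
  have h1exp : (1:ℝ) ≤ Real.exp (2 * a) := by
    have := Real.add_one_le_exp (2 * a)
    linarith
  calc (Measure.pi (fun _ : Fin n => expMeasure 1) (A (a + b))).toReal
      ≤ (ENNReal.ofReal (lam ^ n) * Measure.pi (fun _ : Fin n => expMeasure 1) (A a)).toReal :=
        ENNReal.toReal_mono hfin hkey
    _ = lam ^ n * (Measure.pi (fun _ : Fin n => expMeasure 1) (A a)).toReal := by
        rw [ENNReal.toReal_mul, ENNReal.toReal_ofReal (by positivity)]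
    _ ≤ Real.exp (2 * a) * lam ^ n
          * (Measure.pi (fun _ : Fin n => expMeasure 1) (A a)).toReal := by
        have hX : 0 ≤ lam ^ n * (Measure.pi (fun _ : Fin n => expMeasure 1) (A a)).toReal := by
          positivity
        nlinarith
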